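/- arXiv:1908.03834 — 3 statements merged into one kernel-verified Lean document; each statement's English description precedes it below -/
import Mathlib

section
/- The quantity ((1/2^k) Σ_{i=0}^{k} (2^i/(i+1)!) C(k,i)) tends to 0 as k → ∞. -/
open Finset Filter

/-- The quantity `(1/2^k) Σ_{i=0}^{k} (2^i/(i+1)!) C(k,i)` tends to 0 as k → ∞. -/
theorem ratio_sum_tendsto_zero :
    Tendsto
      (fun k : ℕ =>
        (1 / 2 ^ k : ℝ) *
          ∑ i ∈ Finset.range (k + 1),
            (2 ^ i / (Nat.factorial (i + 1) : ℝ)) * (Nat.choose k i))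
      atTop (nhds 0) := by
  set A : ℕ → ℝ := fun i => 2 ^ i / (Nat.factorial (i + 1) : ℝ) with hAdef
  have hA0 : ∀ i, 0 ≤ A i := fun i => div_nonneg (by positivity) (by positivity)
  have hAsum : Summable A := by
    refine Summable.of_nonneg_of_le hA0 (fun i => ?_) (Real.summable_pow_div_factorial 2)
    have h1 : (Nat.factorial i : ℝ) ≤ (Nat.factorial (i + 1) : ℝ) := by
      exact_mod_cast Nat.factorial_le (Nat.le_succ i)
    show (2:ℝ) ^ i / (Nat.factorial (i + 1) : ℝ) ≤ 2 ^ i / (Nat.factorial i : ℝ)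
    gcongr
  have hTail : Tendsto (fun m => ∑' j, A (j + m)) atTop (nhds 0) := tendsto_sum_nat_add A
  rw [Metric.tendsto_atTop]
  intro ε hε
  have hε2 : (0 : ℝ) < ε / 2 := by linarith
  obtain ⟨m, hm⟩ : ∃ m, ∑' j, A (j + m) < ε / 2 :=
    (hTail.eventually (gt_mem_nhds hε2)).exists
  -- polynomial / exponential tendsto
  have hpoly : Tendsto (fun k : ℕ => (m : ℝ) * 2 ^ m * ((k : ℝ) + 1) ^ m / 2 ^ k)
      atTop (nhds 0) := by
    have h1 := (tendsto_pow_const_div_const_pow_of_one_lt m (one_lt_two (α := ℝ))).comp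
      (tendsto_add_atTop_nat 1)
    have h2 := h1.const_mul ((2 : ℝ) * m * 2 ^ m)
    rw [mul_zero] at h2
    refine h2.congr fun k => ?_
    simp only [Function.comp]
    push_cast
    rw [pow_succ]
    field_simp
  obtain ⟨N, hN⟩ := (hpoly.eventually (Iio_mem_nhds hε2)).exists_forall_of_atTop
  refine ⟨max N m, fun k hk => ?_⟩
  have hkN : N ≤ k := le_trans (le_max_left _ _) hk
  have hkm : m ≤ k := le_trans (le_max_right _ _) hk
  have hS0 : 0 ≤ (1 / 2 ^ k : ℝ) * ∑ i ∈ Finset.range (k + 1), A i * (Nat.choose k i) := by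
    refine mul_nonneg (by positivity) (Finset.sum_nonneg fun i _ => ?_)
    exact mul_nonneg (hA0 i) (by positivity)
  rw [Real.dist_eq, sub_zero, abs_of_nonneg hS0]
  -- split the sum
  have hsplit : ∑ i ∈ Finset.range (k + 1), A i * (Nat.choose k i)
      = (∑ i ∈ Finset.Ico 0 m, A i * (Nat.choose k i))
        + ∑ i ∈ Finset.Ico m (k + 1), A i * (Nat.choose k i) := by
    rw [Finset.range_eq_Ico,
      Finset.sum_Ico_consecutive _ (Nat.zero_le m) (by omega : m ≤ k + 1)]
  have hbound1 : ∑ i ∈ Finset.Ico 0 m, A i * (Nat.choose k i)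
      ≤ (m : ℝ) * (2 ^ m * ((k : ℝ) + 1) ^ m) := by
    calc ∑ i ∈ Finset.Ico 0 m, A i * (Nat.choose k i)
        ≤ ∑ _i ∈ Finset.Ico 0 m, (2 : ℝ) ^ m * ((k : ℝ) + 1) ^ m := by
          refine Finset.sum_le_sum fun i hi => ?_
          have him : i ≤ m := le_of_lt (Finset.mem_Ico.mp hi).2
          have hAi : A i ≤ 2 ^ m := by
            refine le_trans (div_le_self (by positivity) ?_) ?_
            · exact_mod_cast Nat.one_le_iff_ne_zero.mpr (Nat.factorial_pos (i + 1)).ne'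
            · exact pow_le_pow_right₀ (by norm_num) him
          have hC : (Nat.choose k i : ℝ) ≤ ((k : ℝ) + 1) ^ m := by
            have h1 : Nat.choose k i ≤ (k + 1) ^ m := by
              calc Nat.choose k i ≤ k ^ i := Nat.choose_le_pow k i
                _ ≤ (k + 1) ^ i := Nat.pow_le_pow_left (Nat.le_succ k) i
                _ ≤ (k + 1) ^ m := Nat.pow_le_pow_right (by omega) him
            exact_mod_cast h1
          exact mul_le_mul hAi hC (by positivity) (by positivity)
      _ = (m : ℝ) * (2 ^ m * ((k : ℝ) + 1) ^ m) := by
          rw [Finset.sum_const]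
          simp
  have hbound2 : ∑ i ∈ Finset.Ico m (k + 1), A i * (Nat.choose k i)
      ≤ 2 ^ k * ∑' j, A (j + m) := by
    calc ∑ i ∈ Finset.Ico m (k + 1), A i * (Nat.choose k i)
        ≤ ∑ i ∈ Finset.Ico m (k + 1), A i * 2 ^ k := by
          refine Finset.sum_le_sum fun i hi => ?_
          refine mul_le_mul_of_nonneg_left ?_ (hA0 i)
          have hik : i < k + 1 := (Finset.mem_Ico.mp hi).2
          have : Nat.choose k i ≤ 2 ^ k := by
            calc Nat.choose k i ≤ ∑ j ∈ Finset.range (k + 1), Nat.choose k j :=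
                  Finset.single_le_sum (fun j _ => Nat.zero_le _) (Finset.mem_range.mpr hik)
              _ = 2 ^ k := Nat.sum_range_choose k
          exact_mod_cast this
      _ = 2 ^ k * ∑ i ∈ Finset.Ico m (k + 1), A i := by
          rw [Finset.mul_sum]; exact Finset.sum_congr rfl fun i _ => mul_comm _ _
      _ ≤ 2 ^ k * ∑' j, A (j + m) := by
          refine mul_le_mul_of_nonneg_left ?_ (by positivity)
          rw [Finset.sum_Ico_eq_sum_range]
          have hsum' : Summable fun j => A (j + m) := (summable_nat_add_iff m).mpr hAsum
          calc ∑ i ∈ Finset.range (k + 1 - m), A (m + i)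
              = ∑ i ∈ Finset.range (k + 1 - m), A (i + m) := by
                exact Finset.sum_congr rfl fun i _ => by rw [add_comm]
            _ ≤ ∑' j, A (j + m) := Summable.sum_le_tsum _ (fun j _ => hA0 _) hsum'
  have h2k : (0 : ℝ) < 2 ^ k := by positivity
  calc (1 / 2 ^ k : ℝ) * ∑ i ∈ Finset.range (k + 1), A i * (Nat.choose k i)
      ≤ (1 / 2 ^ k : ℝ) * ((m : ℝ) * (2 ^ m * ((k : ℝ) + 1) ^ m) + 2 ^ k * ∑' j, A (j + m)) := by
        refine mul_le_mul_of_nonneg_left ?_ (by positivity)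
        rw [hsplit]
        exact add_le_add hbound1 hbound2
    _ = (m : ℝ) * 2 ^ m * ((k : ℝ) + 1) ^ m / 2 ^ k + ∑' j, A (j + m) := by
        field_simp
    _ < ε / 2 + ε / 2 := add_lt_add (hN k hkN) hm
    _ = ε := by ring
end

section
/- For all integers k ≥ 1, (2k-1)!! + (1/(k+1))·C(2k,k) + 2k·Σ_{j=1}^{k-1} (2k-2j-1)!!·(1/(j+1))·C(2j,j) ≥ (2^k/(k+1))·C(2k,k). -/
open Finset

lemma four_pow_le_factorial (k : ℕ) (hk : 6 ≤ k) : 4 ^ k ≤ (k + 1).factorial := by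
  induction k, hk using Nat.le_induction with
  | base => decide
  | succ n hn ih =>
    calc 4 ^ (n + 1) = 4 * 4 ^ n := by ring
      _ ≤ (n + 2) * (n + 1).factorial := Nat.mul_le_mul (by omega) ih
      _ = (n + 1 + 1).factorial := rfl

lemma main_term_bound (k : ℕ) (hk : 6 ≤ k) :
    2 ^ k * Nat.choose (2 * k) k ≤ (k + 1) * Nat.doubleFactorial (2 * k - 1) := by
  have hfac : Nat.factorial k * Nat.factorial k > 0 :=
    Nat.mul_pos (Nat.factorial_pos k) (Nat.factorial_pos k)
  apply Nat.le_of_mul_le_mul_right _ hfac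
  have h1 : Nat.choose (2 * k) k * Nat.factorial k * Nat.factorial k =
      Nat.factorial (2 * k) := by
    have := Nat.choose_mul_factorial_mul_factorial (show k ≤ 2 * k by omega)
    simpa [show 2 * k - k = k by omega] using this
  have h2 : Nat.factorial (2 * k) =
      2 ^ k * Nat.factorial k * Nat.doubleFactorial (2 * k - 1) := by
    have h3 := Nat.factorial_eq_mul_doubleFactorial (2 * k - 1)
    have h4 : 2 * k - 1 + 1 = 2 * k := by omega
    rw [h4] at h3
    rw [h3, Nat.doubleFactorial_two_mul]
  have h4 : (4 : ℕ) ^ k = 2 ^ k * 2 ^ k := by rw [← mul_pow]; norm_num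
  calc 2 ^ k * Nat.choose (2 * k) k * (Nat.factorial k * Nat.factorial k)
      = 2 ^ k * (Nat.choose (2 * k) k * Nat.factorial k * Nat.factorial k) := by ring
    _ = 2 ^ k * (2 ^ k * Nat.factorial k * Nat.doubleFactorial (2 * k - 1)) := by
        rw [h1, h2]
    _ = 4 ^ k * (Nat.doubleFactorial (2 * k - 1) * Nat.factorial k) := by
        rw [h4]; ring
    _ ≤ (k + 1).factorial * (Nat.doubleFactorial (2 * k - 1) * Nat.factorial k) := by
        gcongr
        exact four_pow_le_factorial k hk
    _ = (k + 1) * Nat.doubleFactorial (2 * k - 1) * (Nat.factorial k * Nat.factorial k) := by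
        rw [Nat.factorial_succ]; ring

/-- For all integers k ≥ 1,
`(2k-1)!! + (1/(k+1))·C(2k,k) + 2k·Σ_{j=1}^{k-1} (2k-2j-1)!!·(1/(j+1))·C(2j,j)
  ≥ (2^k/(k+1))·C(2k,k)`. -/
theorem lower_bound_even_moments (k : ℕ) (hk : 1 ≤ k) :
    (Nat.doubleFactorial (2 * k - 1) : ℝ)
        + (1 / ((k : ℝ) + 1)) * (Nat.choose (2 * k) k)
        + 2 * k *
            ∑ j ∈ Finset.Icc 1 (k - 1),
              (Nat.doubleFactorial (2 * k - 2 * j - 1) : ℝ) * (1 / ((j : ℝ) + 1))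
                * (Nat.choose (2 * j) j)
      ≥ (2 ^ k / ((k : ℝ) + 1)) * (Nat.choose (2 * k) k) := by
  rcases Nat.lt_or_ge k 6 with h | h
  · interval_cases k
    · norm_num [Nat.doubleFactorial]
    · rw [show Finset.Icc 1 (2-1) = {1} from rfl]
      norm_num [Nat.doubleFactorial, Nat.choose]
    · rw [show Finset.Icc 1 (3-1) = {1, 2} from rfl]
      norm_num [Nat.doubleFactorial, Finset.sum_insert, Nat.choose]
    · rw [show Finset.Icc 1 (4-1) = {1, 2, 3} from rfl]
      norm_num [Nat.doubleFactorial, Finset.sum_insert, Nat.choose]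
    · rw [show Finset.Icc 1 (5-1) = {1, 2, 3, 4} from rfl]
      norm_num [Nat.doubleFactorial, Finset.sum_insert, Nat.choose]
  · have hpos : (0:ℝ) < (k : ℝ) + 1 := by positivity
    have hnn1 : (0:ℝ) ≤ (1 / ((k : ℝ) + 1)) * (Nat.choose (2 * k) k) := by positivity
    have hnn2 : (0:ℝ) ≤ 2 * k *
        ∑ j ∈ Finset.Icc 1 (k - 1),
          (Nat.doubleFactorial (2 * k - 2 * j - 1) : ℝ) * (1 / ((j : ℝ) + 1))
            * (Nat.choose (2 * j) j) := by
      apply mul_nonneg (by positivity)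
      apply Finset.sum_nonneg
      intro j _
      positivity
    have hmain : (2 ^ k / ((k : ℝ) + 1)) * (Nat.choose (2 * k) k)
        ≤ (Nat.doubleFactorial (2 * k - 1) : ℝ) := by
      rw [div_mul_eq_mul_div, div_le_iff₀ hpos]
      have := main_term_bound k h
      have : ((2 ^ k * Nat.choose (2 * k) k : ℕ) : ℝ)
          ≤ (((k + 1) * Nat.doubleFactorial (2 * k - 1) : ℕ) : ℝ) := by
        exact_mod_cast this
      push_cast at this
      linarith
    linarith
end

section
/- Let X_1, …, X_k be N×N complex matrices and p_1, …, p_k positive reals with Σ_{i=1}^k 1/p_i = 1. Then |Tr(X_1 X_2 ⋯ X_k)| ≤ Π_{i=1}^k ‖X_i‖_{p_i}, where ‖X‖_p = (Σ_{i=1}^N σ_i(X)^p)^{1/p} is the p-Schatten norm. -/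
open scoped BigOperators ComplexOrder
open Matrix

namespace SchattenHolder

variable {N : ℕ}

/-- complex power of a nonneg vector, with 0^w = 0 -/
noncomputable def dpw (d : Fin N → ℝ) (w : ℂ) : Fin N → ℂ :=
  fun i => if d i = 0 then 0 else (d i : ℂ) ^ w

/-- contraction predicate -/
def Ctr (C : Matrix (Fin N) (Fin N) ℂ) : Prop := (1 - Cᴴ * C).PosSemidef

lemma ctr_one : Ctr (1 : Matrix (Fin N) (Fin N) ℂ) := by
  unfold Ctr; simp [Matrix.PosSemidef.zero]

lemma ctr_unitary {U : Matrix (Fin N) (Fin N) ℂ} (hU : U ∈ unitaryGroup (Fin N) ℂ) : Ctr U := by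
  unfold Ctr
  rw [← Matrix.star_eq_conjTranspose, (mem_unitaryGroup_iff'.mp hU)]
  simp [Matrix.PosSemidef.zero]

lemma ctr_mul {C D : Matrix (Fin N) (Fin N) ℂ} (hC : Ctr C) (hD : Ctr D) : Ctr (C * D) := by
  unfold Ctr
  have key : 1 - (C * D)ᴴ * (C * D) = (1 - Dᴴ * D) + Dᴴ * (1 - Cᴴ * C) * Dᴴᴴ := by
    rw [conjTranspose_mul, conjTranspose_conjTranspose]
    noncomm_ring
  rw [key]
  exact hD.add (hC.mul_mul_conjTranspose_same Dᴴ)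

lemma ctr_list_prod (L : List (Matrix (Fin N) (Fin N) ℂ)) (h : ∀ A ∈ L, Ctr A) :
    Ctr L.prod := by
  induction L with
  | nil => simpa using ctr_one
  | cons A L ih =>
    rw [List.prod_cons]
    exact ctr_mul (h A (by simp)) (ih fun B hB => h B (by simp [hB]))

lemma conj_diag_mul {U : Matrix (Fin N) (Fin N) ℂ} (hU : U ∈ unitaryGroup (Fin N) ℂ)
    (v w : Fin N → ℂ) :
    (U * diagonal v * star U) * (U * diagonal w * star U)
      = U * diagonal (fun i => v i * w i) * star U := by
  have h1 : star U * U = 1 := mem_unitaryGroup_iff'.mp hU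
  calc (U * diagonal v * star U) * (U * diagonal w * star U)
      = U * diagonal v * (star U * U) * diagonal w * star U := by noncomm_ring
    _ = U * (diagonal v * diagonal w) * star U := by rw [h1]; noncomm_ring
    _ = U * diagonal (fun i => v i * w i) * star U := by rw [diagonal_mul_diagonal]

lemma conj_diag_conjTranspose (U : Matrix (Fin N) (Fin N) ℂ) (v : Fin N → ℂ) :
    (U * diagonal v * star U)ᴴ = U * diagonal (star v) * star U := by
  rw [conjTranspose_mul, conjTranspose_mul, diagonal_conjTranspose,
    ← Matrix.star_eq_conjTranspose, ← Matrix.star_eq_conjTranspose, star_star]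
  noncomm_ring

lemma ctr_conj_diag {U : Matrix (Fin N) (Fin N) ℂ} (hU : U ∈ unitaryGroup (Fin N) ℂ)
    {v : Fin N → ℂ} (hv : ∀ i, ‖v i‖ ≤ 1) :
    Ctr (U * diagonal v * star U) := by
  unfold Ctr
  rw [conj_diag_conjTranspose, conj_diag_mul hU]
  have hone : (1 : Matrix (Fin N) (Fin N) ℂ) = U * diagonal (fun _ => (1:ℂ)) * star U := by
    rw [diagonal_one, mul_one, mem_unitaryGroup_iff.mp hU]
  rw [hone, ← Matrix.sub_mul, ← Matrix.mul_sub, diagonal_sub]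
  have := (Matrix.PosSemidef.diagonal (d := fun i => (1:ℂ) - star v i * v i) ?_).mul_mul_conjTranspose_same U
  · rwa [← Matrix.star_eq_conjTranspose] at this
  · intro i
    simp only [Pi.star_apply, RCLike.star_def, Pi.zero_apply]
    rw [Complex.conj_mul']
    rw [show ((1:ℂ) - (‖v i‖:ℝ)^2 : ℂ) = ((1 - (‖v i‖:ℝ)^2 : ℝ) : ℂ) by push_cast; ring]
    rw [show (0:ℂ) = ((0:ℝ):ℂ) by norm_num]
    rw [Complex.real_le_real]
    have := hv i
    nlinarith [norm_nonneg (v i)]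

lemma cs_dot (a b : Fin N → ℂ) :
    ‖star a ⬝ᵥ b‖ ≤ Real.sqrt ((star a ⬝ᵥ a).re) * Real.sqrt ((star b ⬝ᵥ b).re) := by
  let a' : EuclideanSpace ℂ (Fin N) := (WithLp.equiv 2 (Fin N → ℂ)).symm a
  let b' : EuclideanSpace ℂ (Fin N) := (WithLp.equiv 2 (Fin N → ℂ)).symm b
  have hi : ∀ x y : EuclideanSpace ℂ (Fin N),
      (inner ℂ x y : ℂ) = star ((WithLp.equiv 2 (Fin N → ℂ)) x) ⬝ᵥ (WithLp.equiv 2 (Fin N → ℂ)) y :=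
    fun x y => by rw [EuclideanSpace.inner_eq_star_dotProduct, dotProduct_comm]; rfl
  have h1 : (inner ℂ a' b' : ℂ) = star a ⬝ᵥ b := by rw [hi]; rfl
  have h2 : (inner ℂ a' a' : ℂ) = star a ⬝ᵥ a := by rw [hi]; rfl
  have h3 : (inner ℂ b' b' : ℂ) = star b ⬝ᵥ b := by rw [hi]; rfl
  have hn := norm_inner_le_norm (𝕜 := ℂ) a' b'
  rw [h1] at hn
  have hna : ‖a'‖ = Real.sqrt ((star a ⬝ᵥ a).re) := by
    rw [@norm_eq_sqrt_re_inner ℂ, h2]; rfl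
  have hnb : ‖b'‖ = Real.sqrt ((star b ⬝ᵥ b).re) := by
    rw [@norm_eq_sqrt_re_inner ℂ, h3]; rfl
  rw [hna, hnb] at hn
  exact hn

lemma ctr_mulVec {C : Matrix (Fin N) (Fin N) ℂ} (hC : Ctr C) (x : Fin N → ℂ) :
    (star (C *ᵥ x) ⬝ᵥ (C *ᵥ x)).re ≤ (star x ⬝ᵥ x).re := by
  have h := hC.dotProduct_mulVec_nonneg x
  rw [Matrix.sub_mulVec, Matrix.one_mulVec, dotProduct_sub] at h
  have he : star x ⬝ᵥ ((Cᴴ * C) *ᵥ x) = star (C *ᵥ x) ⬝ᵥ (C *ᵥ x) := by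
    rw [← mulVec_mulVec, dotProduct_mulVec, star_mulVec]
  rw [he] at h
  have := (Complex.le_def.mp h).1
  simpa [Complex.sub_re] using this

lemma ctr_entry {C : Matrix (Fin N) (Fin N) ℂ} (hC : Ctr C) (i j : Fin N) :
    ‖C i j‖ ≤ 1 := by
  have hsq : ∀ r : Fin N, (star (Pi.single r 1 : Fin N → ℂ) ⬝ᵥ (Pi.single r 1 : Fin N → ℂ)).re = 1 := by
    intro r
    have : star (Pi.single r 1 : Fin N → ℂ) = (Pi.single r 1 : Fin N → ℂ) := by
      funext s; simp [Pi.single_apply, apply_ite]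
    rw [this, single_dotProduct]
    simp
  have hstar : star (Pi.single i 1 : Fin N → ℂ) = (Pi.single i 1 : Fin N → ℂ) := by
    funext r; simp [Pi.single_apply, apply_ite]
  have key : C i j = star (Pi.single i 1 : Fin N → ℂ) ⬝ᵥ (C *ᵥ (Pi.single j 1 : Fin N → ℂ)) := by
    rw [hstar, single_dotProduct, mulVec_single]
    simp
  rw [key]
  calc ‖star (Pi.single i 1 : Fin N → ℂ) ⬝ᵥ (C *ᵥ (Pi.single j 1 : Fin N → ℂ))‖
      ≤ Real.sqrt ((star (Pi.single i 1 : Fin N → ℂ) ⬝ᵥ (Pi.single i 1 : Fin N → ℂ)).re)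
        * Real.sqrt ((star (C *ᵥ (Pi.single j 1 : Fin N → ℂ)) ⬝ᵥ (C *ᵥ (Pi.single j 1 : Fin N → ℂ))).re) :=
      cs_dot _ _
    _ ≤ 1 * Real.sqrt ((star (Pi.single j 1 : Fin N → ℂ) ⬝ᵥ (Pi.single j 1 : Fin N → ℂ)).re) := by
        apply mul_le_mul
        · rw [hsq i]; simp
        · exact Real.sqrt_le_sqrt (ctr_mulVec hC _)
        · positivity
        · norm_num
    _ = 1 := by rw [hsq j]; simp

lemma star_mem_unitary {U : Matrix (Fin N) (Fin N) ℂ} (hU : U ∈ unitaryGroup (Fin N) ℂ) :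
    star U ∈ unitaryGroup (Fin N) ℂ := by
  rw [mem_unitaryGroup_iff, star_star]
  exact mem_unitaryGroup_iff'.mp hU

lemma dpw_one {d : Fin N → ℝ} : dpw d 1 = fun i => (d i : ℂ) := by
  funext i
  unfold dpw
  split_ifs with h
  · simp [h]
  · exact Complex.cpow_one _

lemma dpw_add {d : Fin N → ℝ} (a b : ℂ) :
    dpw d (a + b) = fun i => dpw d a i * dpw d b i := by
  funext i
  unfold dpw
  split_ifs with h
  · ring
  · exact Complex.cpow_add _ _ (by exact_mod_cast h)

lemma abs_dpw_le_one {d : Fin N → ℝ} {w : ℂ} (hd : ∀ i, 0 ≤ d i) (hd1 : ∀ i, d i ≤ 1)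
    (hw : 0 ≤ w.re) (i : Fin N) : ‖dpw d w i‖ ≤ 1 := by
  unfold dpw
  split_ifs with h
  · simp
  · rw [Complex.norm_cpow_eq_rpow_re_of_pos (lt_of_le_of_ne (hd i) (Ne.symm h))]
    exact Real.rpow_le_one (hd i) (hd1 i) hw

lemma abs_dpw_eq_one_of_im {d : Fin N → ℝ} {w : ℂ} (hd : ∀ i, 0 ≤ d i)
    (hw : w.re = 0) (i : Fin N) : ‖dpw d w i‖ ≤ 1 := by
  unfold dpw
  split_ifs with h
  · simp
  · rw [Complex.norm_cpow_eq_rpow_re_of_pos (lt_of_le_of_ne (hd i) (Ne.symm h)), hw,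
      Real.rpow_zero]

noncomputable def trm (C U : Matrix (Fin N) (Fin N) ℂ) (d : Fin N → ℝ) (w : ℂ) :
    Matrix (Fin N) (Fin N) ℂ := C * U * diagonal (dpw d w) * star U

lemma trm_eq (C U : Matrix (Fin N) (Fin N) ℂ) (d : Fin N → ℝ) (w : ℂ) :
    trm C U d w = C * (U * diagonal (dpw d w) * star U) := by
  unfold trm; noncomm_ring

/-- splitting of exponents -/
lemma trm_split {U : Matrix (Fin N) (Fin N) ℂ} (hU : U ∈ unitaryGroup (Fin N) ℂ)
    (C : Matrix (Fin N) (Fin N) ℂ) (d : Fin N → ℝ) (a b : ℂ) :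
    trm C U d (a + b) = trm (C * (U * diagonal (dpw d a) * star U)) U d b := by
  rw [trm_eq, trm_eq, dpw_add, ← conj_diag_mul hU (dpw d a) (dpw d b)]
  noncomm_ring

lemma ctr_trm_of_im {C U : Matrix (Fin N) (Fin N) ℂ} (hC : Ctr C)
    (hU : U ∈ unitaryGroup (Fin N) ℂ) {d : Fin N → ℝ} (hd : ∀ i, 0 ≤ d i) {w : ℂ}
    (hw : w.re = 0) : Ctr (trm C U d w) := by
  rw [trm_eq]
  exact ctr_mul hC (ctr_conj_diag hU (abs_dpw_eq_one_of_im hd hw))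

lemma ctr_sandwich_of_im {U : Matrix (Fin N) (Fin N) ℂ}
    (hU : U ∈ unitaryGroup (Fin N) ℂ) {d : Fin N → ℝ} (hd : ∀ i, 0 ≤ d i) {w : ℂ}
    (hw : w.re = 0) : Ctr (U * diagonal (dpw d w) * star U) :=
  ctr_conj_diag hU (abs_dpw_eq_one_of_im hd hw)

/-- base trace inequality -/
lemma base_trace {C U : Matrix (Fin N) (Fin N) ℂ} (hC : Ctr C)
    (hU : U ∈ unitaryGroup (Fin N) ℂ) {d : Fin N → ℝ} (hd : ∀ i, 0 ≤ d i) :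
    ‖trace (trm C U d 1)‖ ≤ ∑ i, d i := by
  unfold trm
  rw [dpw_one]
  have h1 : trace (C * U * diagonal (fun i => (d i : ℂ)) * star U)
      = trace ((star U * C * U) * diagonal (fun i => (d i : ℂ))) := by
    rw [trace_mul_comm]
    congr 1
    noncomm_ring
  rw [h1]
  have h2 : trace ((star U * C * U) * diagonal (fun i => (d i : ℂ)))
      = ∑ i, (star U * C * U) i i * (d i : ℂ) := by
    rw [Matrix.trace]
    congr 1
    funext i
    rw [Matrix.diag_apply, mul_diagonal]
  rw [h2]
  have hM : Ctr (star U * C * U) :=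
    ctr_mul (ctr_mul (ctr_unitary (star_mem_unitary hU)) hC) (ctr_unitary hU)
  calc ‖∑ i, (star U * C * U) i i * (d i : ℂ)‖
      ≤ ∑ i, ‖(star U * C * U) i i * (d i : ℂ)‖ := norm_sum_le _ _
    _ ≤ ∑ i, d i := by
        apply Finset.sum_le_sum
        intro i _
        rw [norm_mul, Complex.norm_of_nonneg (hd i)]
        exact mul_le_of_le_one_left (hd i) (ctr_entry hM i i)

lemma list_prod_entry_diff (L : List (ℂ → Matrix (Fin N) (Fin N) ℂ))
    (h : ∀ g ∈ L, ∀ i j, Differentiable ℂ fun z => g z i j) :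
    ∀ i j, Differentiable ℂ fun z => (L.map (fun g => g z)).prod i j := by
  induction L with
  | nil =>
    intro i j
    simp only [List.map_nil, List.prod_nil]
    exact differentiable_const _
  | cons g L ih =>
    intro i j
    simp only [List.map_cons, List.prod_cons, Matrix.mul_apply]
    apply Differentiable.fun_sum
    intro k _
    exact (h g (by simp) i k).mul (ih (fun g' hg' => h g' (by simp [hg'])) k j)

lemma list_prod_entry_bound (L : List (ℂ → Matrix (Fin N) (Fin N) ℂ)) (S : Set ℂ)
    (K : ℝ) (hK : 0 ≤ K)
    (h : ∀ g ∈ L, ∀ z ∈ S, ∀ i j, ‖g z i j‖ ≤ K) :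
    ∀ z ∈ S, ∀ i j, ‖(L.map (fun g => g z)).prod i j‖ ≤ ((N : ℝ) * K) ^ L.length := by
  induction L with
  | nil =>
    intro z hz i j
    simp only [List.map_nil, List.prod_nil, List.length_nil, pow_zero]
    rw [Matrix.one_apply]
    split_ifs <;> simp
  | cons g L ih =>
    intro z hz i j
    simp only [List.map_cons, List.prod_cons, Matrix.mul_apply, List.length_cons]
    calc ‖∑ k, g z i k * (L.map (fun g => g z)).prod k j‖
        ≤ ∑ k, ‖g z i k * (L.map (fun g => g z)).prod k j‖ := norm_sum_le _ _
      _ ≤ ∑ _k : Fin N, K * ((N : ℝ) * K) ^ L.length := by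
          apply Finset.sum_le_sum
          intro k _
          rw [norm_mul]
          exact mul_le_mul (h g (by simp) z hz i k)
            (ih (fun g' hg' => h g' (by simp [hg'])) z hz k j)
            (norm_nonneg _) hK
      _ = (N : ℝ) * (K * ((N : ℝ) * K) ^ L.length) := by
          rw [Finset.sum_const, Finset.card_univ, Fintype.card_fin, nsmul_eq_mul]
      _ ≤ ((N : ℝ) * K) ^ (L.length + 1) := by
          rw [pow_succ]
          ring_nf
          exact le_refl _

lemma sandwich_entry (A B : Matrix (Fin N) (Fin N) ℂ) (v : Fin N → ℂ) (i j : Fin N) :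
    (A * diagonal v * B) i j = ∑ k, A i k * v k * B k j := by
  rw [Matrix.mul_apply]
  congr 1
  funext k
  rw [mul_diagonal]

lemma trm_entry (C U : Matrix (Fin N) (Fin N) ℂ) (d : Fin N → ℝ) (w : ℂ) (i j : Fin N) :
    trm C U d w i j = ∑ k, (C * U) i k * dpw d w k * (star U) k j :=
  sandwich_entry (C * U) (star U) (dpw d w) i j

lemma trm_entry_diff (C U : Matrix (Fin N) (Fin N) ℂ) (d : Fin N → ℝ) {φ : ℂ → ℂ}
    (hφ : Differentiable ℂ φ) (i j : Fin N) :
    Differentiable ℂ fun z => trm C U d (φ z) i j := by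
  simp only [trm_entry]
  apply Differentiable.fun_sum
  intro k _
  apply Differentiable.mul _ (differentiable_const _)
  apply Differentiable.const_mul
  unfold dpw
  split_ifs with h
  · exact differentiable_const _
  · exact Differentiable.const_cpow hφ (Or.inl (by exact_mod_cast h))

lemma trm_entry_bound {C U : Matrix (Fin N) (Fin N) ℂ} (hC : Ctr C)
    (hU : U ∈ unitaryGroup (Fin N) ℂ) {d : Fin N → ℝ} (hd : ∀ i, 0 ≤ d i) (hd1 : ∀ i, d i ≤ 1)
    {w : ℂ} (hw : 0 ≤ w.re) (i j : Fin N) :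
    ‖trm C U d w i j‖ ≤ (N : ℝ) := by
  rw [trm_entry]
  calc ‖∑ k, (C * U) i k * dpw d w k * (star U) k j‖
      ≤ ∑ k, ‖(C * U) i k * dpw d w k * (star U) k j‖ := norm_sum_le _ _
    _ ≤ ∑ _k : Fin N, 1 := by
        apply Finset.sum_le_sum
        intro k _
        rw [norm_mul, norm_mul]
        have h1 : ‖(C * U) i k‖ ≤ 1 :=
          ctr_entry (ctr_mul hC (ctr_unitary hU)) i k
        have h2 : ‖dpw d w k‖ ≤ 1 := abs_dpw_le_one hd hd1 hw k
        have h3 : ‖(star U) k j‖ ≤ 1 :=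
          ctr_entry (ctr_unitary (star_mem_unitary hU)) k j
        calc ‖(C * U) i k‖ * ‖dpw d w k‖ * ‖(star U) k j‖
            ≤ 1 * 1 * 1 := by
              apply mul_le_mul _ h3 (norm_nonneg _) (by norm_num)
              exact mul_le_mul h1 h2 (norm_nonneg _) (by norm_num)
          _ = 1 := by norm_num
    _ = (N : ℝ) := by simp

lemma absorb (W : Matrix (Fin N) (Fin N) ℂ) (m : ℕ) (A B : Fin (m+1) → Matrix (Fin N) (Fin N) ℂ) :
    W * (List.ofFn (fun j => A j * B j)).prod
      = (List.ofFn (fun j : Fin (m+1) => (if j = 0 then W * A j else A j) * B j)).prod := by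
  rw [List.ofFn_succ, List.ofFn_succ, List.prod_cons, List.prod_cons]
  simp only [Fin.succ_ne_zero, ite_false, ite_true, if_true]
  rw [← mul_assoc, ← mul_assoc]

lemma trace_ofFn_diff {q : ℕ} (C U : Fin q → Matrix (Fin N) (Fin N) ℂ)
    (d : Fin q → Fin N → ℝ) (φ : Fin q → ℂ → ℂ) (hφ : ∀ j, Differentiable ℂ (φ j)) :
    Differentiable ℂ (fun z =>
      trace (List.ofFn (fun j => trm (C j) (U j) (d j) (φ j z))).prod) := by
  have hrw : (fun z => trace (List.ofFn (fun j => trm (C j) (U j) (d j) (φ j z))).prod)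
      = fun z => ∑ i, (((List.ofFn (fun j => fun z' => trm (C j) (U j) (d j) (φ j z'))).map
          (fun g : ℂ → Matrix (Fin N) (Fin N) ℂ => g z)).prod) i i := by
    funext z
    rw [List.map_ofFn]
    rfl
  rw [hrw]
  apply Differentiable.fun_sum
  intro i _
  apply list_prod_entry_diff
  intro g hg i' j'
  rw [List.mem_ofFn] at hg
  obtain ⟨j, rfl⟩ := hg
  exact trm_entry_diff (C j) (U j) (d j) (hφ j) i' j'

lemma trace_ofFn_bound {q : ℕ} {C U : Fin q → Matrix (Fin N) (Fin N) ℂ}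
    {d : Fin q → Fin N → ℝ} (φ : Fin q → ℂ → ℂ) (S : Set ℂ)
    (hC : ∀ j, Ctr (C j)) (hU : ∀ j, U j ∈ unitaryGroup (Fin N) ℂ)
    (hd : ∀ j i, 0 ≤ d j i) (hd1 : ∀ j i, d j i ≤ 1)
    (hφ : ∀ j, ∀ z ∈ S, 0 ≤ (φ j z).re) :
    ∀ z ∈ S, ‖trace (List.ofFn (fun j => trm (C j) (U j) (d j) (φ j z))).prod‖
        ≤ (N : ℝ) * ((N : ℝ) * (N : ℝ)) ^ q := by
  intro z hz
  have hent := list_prod_entry_bound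
    (List.ofFn (fun j => fun z' => trm (C j) (U j) (d j) (φ j z'))) S (N : ℝ)
    (Nat.cast_nonneg N)
    (by
      intro g hg z' hz' i j
      rw [List.mem_ofFn] at hg
      obtain ⟨j', rfl⟩ := hg
      exact trm_entry_bound (hC j') (hU j') (hd j') (hd1 j') (hφ j' z' hz') i j)
    z hz
  have hrw : (List.ofFn (fun j => trm (C j) (U j) (d j) (φ j z)))
      = ((List.ofFn (fun j => fun z' => trm (C j) (U j) (d j) (φ j z'))).map
          (fun g : ℂ → Matrix (Fin N) (Fin N) ℂ => g z)) := by
    rw [List.map_ofFn]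
    rfl
  rw [hrw, Matrix.trace]
  calc ‖∑ i, (((List.ofFn (fun j => fun z' => trm (C j) (U j) (d j) (φ j z'))).map
          (fun g : ℂ → Matrix (Fin N) (Fin N) ℂ => g z)).prod).diag i‖
      ≤ ∑ i, ‖(((List.ofFn (fun j => fun z' => trm (C j) (U j) (d j) (φ j z'))).map
          (fun g : ℂ → Matrix (Fin N) (Fin N) ℂ => g z)).prod) i i‖ := norm_sum_le _ _
    _ ≤ ∑ _i : Fin N, ((N : ℝ) * (N : ℝ)) ^ q := by
        apply Finset.sum_le_sum
        intro i _
        have := hent i i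
        simpa [List.length_ofFn] using this
    _ ≤ (N : ℝ) * ((N : ℝ) * (N : ℝ)) ^ q := by
        rw [Finset.sum_const, Finset.card_univ, Fintype.card_fin, nsmul_eq_mul]

set_option maxHeartbeats 1000000 in
lemma key (k : ℕ) :
    ∀ (C U : Fin k → Matrix (Fin N) (Fin N) ℂ) (d : Fin k → Fin N → ℝ) (t : Fin k → ℝ),
    (∀ j, Ctr (C j)) → (∀ j, U j ∈ unitaryGroup (Fin N) ℂ) →
    (∀ j i, 0 ≤ d j i) → (∀ j, ∑ i, d j i = 1) → (∀ j, 0 < t j) → (∑ j, t j = 1) →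
    ‖trace (List.ofFn (fun j => trm (C j) (U j) (d j) ((t j : ℝ) : ℂ))).prod‖ ≤ 1 := by
  induction k with
  | zero =>
    intro C U d t _ _ _ _ _ hts
    simp at hts
  | succ k ih =>
    intro C U d t hC hU hd hds ht hts
    have hd1 : ∀ j i, d j i ≤ 1 := by
      intro j i
      calc d j i ≤ ∑ i', d j i' := Finset.single_le_sum (fun i' _ => hd j i') (Finset.mem_univ i)
        _ = 1 := hds j
    cases k with
    | zero =>
      have ht0 : t 0 = 1 := by
        have h := hts
        rw [Fin.sum_univ_succ] at h
        simpa using h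
      simp only [List.ofFn_succ, List.ofFn_zero, List.prod_cons, List.prod_nil, mul_one]
      rw [ht0, Complex.ofReal_one]
      calc ‖trace (trm (C 0) (U 0) (d 0) 1)‖ ≤ ∑ i, d 0 i :=
            base_trace (hC 0) (hU 0) (hd 0)
        _ = 1 := hds 0
    | succ m =>
      set r : ℝ := ∑ j : Fin (m+1), t j.succ with hrdef
      have hr : 0 < r := Finset.sum_pos (fun j _ => ht j.succ) ⟨0, Finset.mem_univ _⟩
      have htr : t 0 + r = 1 := by rw [hrdef, ← Fin.sum_univ_succ]; exact hts
      have ht01 : t 0 < 1 := by linarith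
      set s : Fin (m+2) → ℝ := fun j => t j / r with hsdef
      have hspos : ∀ j, 0 < s j := fun j => div_pos (ht j) hr
      set φ : Fin (m+2) → ℂ → ℂ :=
        fun j z => if j = 0 then z else (1 - z) * ((s j : ℝ) : ℂ) with hφdef
      have hφ0 : ∀ z : ℂ, φ 0 z = z := fun z => if_pos rfl
      have hφs : ∀ (j : Fin (m+1)) (z : ℂ), φ j.succ z = (1 - z) * ((s j.succ : ℝ) : ℂ) :=
        fun j z => if_neg (Fin.succ_ne_zero j)
      have hφre : ∀ (j : Fin (m+1)) (z : ℂ), (φ j.succ z).re = (1 - z.re) * s j.succ := by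
        intro j z
        rw [hφs]
        simp [Complex.mul_re]
      set f : ℂ → ℂ :=
        fun z => trace (List.ofFn (fun j : Fin (m+2) =>
          trm (C j) (U j) (d j) (φ j z))).prod with hfdef
      -- differentiability
      have hdiff : Differentiable ℂ f := by
        rw [hfdef]
        apply trace_ofFn_diff
        intro j
        rcases eq_or_ne j 0 with h0 | h0
        · subst h0
          rw [show φ 0 = fun z : ℂ => z from funext hφ0]
          exact differentiable_id
        · obtain ⟨j', rfl⟩ := Fin.exists_succ_eq.mpr h0
          rw [show φ j'.succ = fun z : ℂ => (1 - z) * ((s j'.succ : ℝ) : ℂ) from funext (hφs j')]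
          exact (differentiable_const _ |>.sub differentiable_id).mul (differentiable_const _)
      -- boundedness
      have hB : BddAbove ((norm ∘ f) '' Complex.HadamardThreeLines.verticalClosedStrip 0 1) := by
        refine ⟨(N : ℝ) * ((N : ℝ) * (N : ℝ)) ^ (m + 2), ?_⟩
        rintro y ⟨z, hz, rfl⟩
        simp only [Function.comp_apply]
        have hbnd := trace_ofFn_bound φ (Complex.HadamardThreeLines.verticalClosedStrip 0 1)
          hC hU hd hd1 ?_ z hz
        · exact hbnd
        · intro j z' hz'
          have hz'' : z'.re ∈ Set.Icc (0:ℝ) 1 := hz'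
          rcases eq_or_ne j 0 with h0 | h0
          · subst h0
            rw [hφ0]
            exact hz''.1
          · obtain ⟨j'', rfl⟩ := Fin.exists_succ_eq.mpr h0
            rw [hφre]
            have h1 : z'.re ≤ 1 := hz''.2
            have h2 := (hspos j''.succ).le
            nlinarith
      -- boundary re = 0
      have ha : ∀ z ∈ Complex.re ⁻¹' {0}, ‖f z‖ ≤ 1 := by
        intro z hz
        have hz0 : z.re = 0 := hz
        have hW : Ctr (trm (C 0) (U 0) (d 0) (φ 0 z)) := by
          apply ctr_trm_of_im (hC 0) (hU 0) (hd 0)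
          rw [hφ0]; exact hz0
        set A : Fin (m+1) → Matrix (Fin N) (Fin N) ℂ := fun j =>
          C j.succ * (U j.succ * diagonal (dpw (d j.succ)
            (φ j.succ z - ((s j.succ : ℝ) : ℂ))) * star (U j.succ)) with hAdef
        set B : Fin (m+1) → Matrix (Fin N) (Fin N) ℂ := fun j =>
          U j.succ * diagonal (dpw (d j.succ) ((s j.succ : ℝ) : ℂ)) * star (U j.succ) with hBdef
        have hActr : ∀ j, Ctr (A j) := by
          intro j
          apply ctr_mul (hC j.succ)
          apply ctr_sandwich_of_im (hU j.succ) (hd j.succ)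
          rw [Complex.sub_re, hφre, Complex.ofReal_re, hz0]
          ring
        have hsplit : ∀ j : Fin (m+1),
            trm (C j.succ) (U j.succ) (d j.succ) (φ j.succ z) = A j * B j := by
          intro j
          have hxy : φ j.succ z = (φ j.succ z - ((s j.succ : ℝ) : ℂ)) + ((s j.succ : ℝ) : ℂ) := by
            ring
          rw [hxy, trm_split (hU j.succ), trm_eq]
        set C'' : Fin (m+1) → Matrix (Fin N) (Fin N) ℂ :=
          fun j => if j = 0 then (trm (C 0) (U 0) (d 0) (φ 0 z)) * A j else A j with hC''def
        have hctr'' : ∀ j, Ctr (C'' j) := by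
          intro j
          rw [hC''def]
          dsimp only
          split_ifs with h0
          · exact ctr_mul hW (hActr j)
          · exact hActr j
        have hsum : (∑ j : Fin (m+1), s j.succ) = 1 := by
          rw [hsdef]
          dsimp only
          rw [← Finset.sum_div, ← hrdef, div_self hr.ne']
        have hfz : f z = trace (List.ofFn (fun j : Fin (m+2) =>
            trm (C j) (U j) (d j) (φ j z))).prod := rfl
        have e1 : (List.ofFn (fun j : Fin (m+2) =>
              trm (C j) (U j) (d j) (φ j z))).prod
            = (List.ofFn (fun j : Fin (m+1) =>
                trm (C'' j) (U j.succ) (d j.succ) ((s j.succ : ℝ) : ℂ))).prod := by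
          rw [List.ofFn_succ, List.prod_cons]
          have h2 : (fun j : Fin (m+1) => trm (C j.succ) (U j.succ) (d j.succ) (φ j.succ z))
              = fun j : Fin (m+1) => A j * B j := by
            funext j
            exact hsplit j
          rw [h2, absorb]
          have h4 : (fun j : Fin (m+1) =>
              trm (C'' j) (U j.succ) (d j.succ) ((s j.succ : ℝ) : ℂ))
              = (fun j : Fin (m+1) =>
                  (if j = 0 then trm (C 0) (U 0) (d 0) (φ 0 z) * A j else A j) * B j) :=
            funext fun j => trm_eq _ _ _ _
          rw [h4]
        have hkey := ih C'' (fun j => U j.succ) (fun j => d j.succ) (fun j => s j.succ)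
          hctr'' (fun j => hU j.succ) (fun j => hd j.succ) (fun j => hds j.succ)
          (fun j => hspos j.succ) hsum
        rw [hfz, e1]
        exact hkey
      -- boundary re = 1
      have hb : ∀ z ∈ Complex.re ⁻¹' {1}, ‖f z‖ ≤ 1 := by
        intro z hz
        have hz1 : z.re = 1 := hz
        have hWctr : Ctr (C 0 * (U 0 * diagonal (dpw (d 0) (z - 1)) * star (U 0))) := by
          apply ctr_mul (hC 0)
          apply ctr_sandwich_of_im (hU 0) (hd 0)
          rw [Complex.sub_re, hz1, Complex.one_re]
          ring
        have hhead : trm (C 0) (U 0) (d 0) (φ 0 z)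
            = trm (C 0 * (U 0 * diagonal (dpw (d 0) (z - 1)) * star (U 0))) (U 0) (d 0) 1 := by
          rw [hφ0]
          have hxy : z = (z - 1) + 1 := by ring
          rw [show trm (C 0) (U 0) (d 0) z = trm (C 0) (U 0) (d 0) ((z-1) + 1) by rw [← hxy]]
          rw [trm_split (hU 0)]
        have hVctr : ∀ j : Fin (m+1), Ctr (trm (C j.succ) (U j.succ) (d j.succ) (φ j.succ z)) := by
          intro j
          apply ctr_trm_of_im (hC j.succ) (hU j.succ) (hd j.succ)
          rw [hφre, hz1]
          ring
        have hRctr : Ctr (List.ofFn (fun j : Fin (m+1) =>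
            trm (C j.succ) (U j.succ) (d j.succ) (φ j.succ z))).prod := by
          apply ctr_list_prod
          intro M hM
          rw [List.mem_ofFn] at hM
          obtain ⟨j, rfl⟩ := hM
          exact hVctr j
        have hfz : f z = trace (List.ofFn (fun j : Fin (m+2) =>
            trm (C j) (U j) (d j) (φ j z))).prod := rfl
        have e2 : (List.ofFn (fun j : Fin (m+2) => trm (C j) (U j) (d j) (φ j z))).prod
            = trm (C 0 * (U 0 * diagonal (dpw (d 0) (z - 1)) * star (U 0))) (U 0) (d 0) 1
              * (List.ofFn (fun j : Fin (m+1) =>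
                  trm (C j.succ) (U j.succ) (d j.succ) (φ j.succ z))).prod := by
          rw [List.ofFn_succ, List.prod_cons, ← hhead]
        have e3 : trace (trm (C 0 * (U 0 * diagonal (dpw (d 0) (z - 1)) * star (U 0))) (U 0) (d 0) 1
              * (List.ofFn (fun j : Fin (m+1) =>
                  trm (C j.succ) (U j.succ) (d j.succ) (φ j.succ z))).prod)
            = trace (trm ((List.ofFn (fun j : Fin (m+1) =>
                  trm (C j.succ) (U j.succ) (d j.succ) (φ j.succ z))).prod
                * (C 0 * (U 0 * diagonal (dpw (d 0) (z - 1)) * star (U 0)))) (U 0) (d 0) 1) := by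
          rw [trace_mul_comm]
          congr 1
          unfold trm
          noncomm_ring
        rw [hfz, e2, e3]
        calc ‖trace (trm ((List.ofFn (fun j : Fin (m+1) =>
                  trm (C j.succ) (U j.succ) (d j.succ) (φ j.succ z))).prod
                * (C 0 * (U 0 * diagonal (dpw (d 0) (z - 1)) * star (U 0)))) (U 0) (d 0) 1)‖
            ≤ ∑ i, d 0 i := base_trace (ctr_mul hRctr hWctr) (hU 0) (hd 0)
          _ = 1 := hds 0
      -- apply Hadamard three lines
      have hzmem : ((t 0 : ℝ) : ℂ) ∈ Complex.HadamardThreeLines.verticalClosedStrip 0 1 := by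
        show ((t 0 : ℝ) : ℂ).re ∈ Set.Icc (0:ℝ) 1
        rw [Complex.ofReal_re]
        exact ⟨(ht 0).le, ht01.le⟩
      have hmain := Complex.HadamardThreeLines.norm_le_interp_of_mem_verticalClosedStrip' (f := f) zero_lt_one
        hzmem (hdiff.diffContOnCl) hB ha hb
      rw [Real.one_rpow, Real.one_rpow, mul_one] at hmain
      have hfeq : f ((t 0 : ℝ) : ℂ)
          = trace (List.ofFn (fun j : Fin (m+2) =>
              trm (C j) (U j) (d j) ((t j : ℝ) : ℂ))).prod := by
        have hfz : f ((t 0 : ℝ) : ℂ) = trace (List.ofFn (fun j : Fin (m+2) =>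
            trm (C j) (U j) (d j) (φ j ((t 0 : ℝ) : ℂ)))).prod := rfl
        rw [hfz]
        have hfun : (fun j : Fin (m+2) => trm (C j) (U j) (d j) (φ j ((t 0 : ℝ) : ℂ)))
            = fun j : Fin (m+2) => trm (C j) (U j) (d j) ((t j : ℝ) : ℂ) := by
          funext j
          have hexp : φ j ((t 0 : ℝ) : ℂ) = ((t j : ℝ) : ℂ) := by
            rcases eq_or_ne j 0 with h0 | h0
            · subst h0
              exact hφ0 _
            · obtain ⟨j', rfl⟩ := Fin.exists_succ_eq.mpr h0
              rw [hφs]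
              have h1r : (1 : ℂ) - ((t 0 : ℝ) : ℂ) = ((r : ℝ) : ℂ) := by
                rw [show (r : ℝ) = 1 - t 0 by linarith]
                push_cast
                ring
              rw [h1r, hsdef]
              dsimp only
              rw [← Complex.ofReal_mul]
              congr 1
              field_simp
          rw [hexp]
        rw [hfun]
      rw [hfeq] at hmain
      exact hmain

lemma smul_ofFn_prod : ∀ (q : ℕ) (c : Fin q → ℂ) (M : Fin q → Matrix (Fin N) (Fin N) ℂ),
    (List.ofFn fun j => c j • M j).prod = (∏ j, c j) • (List.ofFn M).prod := by
  intro q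
  induction q with
  | zero => intro c M; simp
  | succ q ih =>
    intro c M
    rw [List.ofFn_succ, List.prod_cons, List.ofFn_succ (f := M), List.prod_cons,
      Fin.prod_univ_succ, ih (fun j => c j.succ) (fun j => M j.succ)]
    rw [smul_mul_assoc, mul_smul_comm, smul_smul]

lemma ofFn_prod_zero : ∀ (q : ℕ) (M : Fin q → Matrix (Fin N) (Fin N) ℂ) (j : Fin q),
    M j = 0 → (List.ofFn M).prod = 0 := by
  intro q
  induction q with
  | zero => intro M j; exact absurd j.2 (by omega)
  | succ q ih =>
    intro M j hj
    rw [List.ofFn_succ, List.prod_cons]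
    rcases eq_or_ne j 0 with h0 | h0
    · subst h0
      rw [hj, zero_mul]
    · obtain ⟨j', rfl⟩ := Fin.exists_succ_eq.mpr h0
      rw [ih (fun i => M i.succ) j' hj, mul_zero]

/-- contraction from a conjugated real-diagonal identity for `Cᴴ * C` -/
lemma ctr_of_conj_eq {Cm V : Matrix (Fin N) (Fin N) ℂ} (hV : V ∈ unitaryGroup (Fin N) ℂ)
    {w : Fin N → ℝ} (h : Cmᴴ * Cm = V * diagonal (fun i => ((w i : ℝ) : ℂ)) * star V)
    (hw : ∀ i, w i ≤ 1) : Ctr Cm := by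
  unfold Ctr
  rw [h]
  have hone : (1 : Matrix (Fin N) (Fin N) ℂ) = V * diagonal (fun _ => (1:ℂ)) * star V := by
    rw [diagonal_one, mul_one, mem_unitaryGroup_iff.mp hV]
  rw [hone, ← Matrix.sub_mul, ← Matrix.mul_sub, diagonal_sub]
  have hps := (Matrix.PosSemidef.diagonal
    (d := fun i => (1 : ℂ) - ((w i : ℝ) : ℂ)) ?_).mul_mul_conjTranspose_same V
  · rwa [← Matrix.star_eq_conjTranspose] at hps
  · intro i
    simp only [Pi.zero_apply]
    rw [show (1 : ℂ) - ((w i : ℝ) : ℂ) = (((1 - w i : ℝ)) : ℂ) by push_cast; ring]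
    rw [show (0:ℂ) = ((0:ℝ):ℂ) by norm_num, Complex.real_le_real]
    linarith [hw i]

end SchattenHolder

open SchattenHolder

/-- The i-th singular value of a square complex matrix X: the square root of
the i-th eigenvalue of the positive semidefinite matrix Xᴴ X. -/
noncomputable def singularValues {N : ℕ} (X : Matrix (Fin N) (Fin N) ℂ) :
    Fin N → ℝ :=
  fun i => Real.sqrt ((Matrix.posSemidef_conjTranspose_mul_self X).1.eigenvalues i)

/-- The p-Schatten norm `‖X‖_p = (Σ_i σ_i(X)^p)^{1/p}`. -/
noncomputable def schattenNorm {N : ℕ} (p : ℝ) (X : Matrix (Fin N) (Fin N) ℂ) : ℝ :=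
  (∑ i, singularValues X i ^ p) ^ (1 / p)

/-- Generalized Hölder's trace inequality: for N×N complex matrices
X_1, …, X_k and positive reals p_1, …, p_k with Σ 1/p_i = 1, we have
`|Tr(X_1 X_2 ⋯ X_k)| ≤ Π_i ‖X_i‖_{p_i}`. -/
theorem abs_trace_prod_le_prod_schattenNorm {N k : ℕ}
    (X : Fin k → Matrix (Fin N) (Fin N) ℂ) (p : Fin k → ℝ)
    (hp : ∀ i, 0 < p i) (hpq : ∑ i, 1 / p i = 1) :
    ‖(List.ofFn X).prod.trace‖ ≤ ∏ i, schattenNorm (p i) (X i) := by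
  classical
  have hσ0 : ∀ j i, 0 ≤ singularValues (X j) i := fun j i => Real.sqrt_nonneg _
  set S : Fin k → ℝ := fun j => ∑ i, singularValues (X j) i ^ p j with hSdef
  have hschat : ∀ j, schattenNorm (p j) (X j) = S j ^ (1 / p j) := fun j => rfl
  have hS0 : ∀ j, 0 ≤ S j := fun j =>
    Finset.sum_nonneg fun i _ => Real.rpow_nonneg (hσ0 j i) _
  have hRHS0 : 0 ≤ ∏ j, schattenNorm (p j) (X j) :=
    Finset.prod_nonneg fun j _ => by rw [hschat]; exact Real.rpow_nonneg (hS0 j) _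
  set e : Fin k → Fin N → ℝ :=
    fun j => (Matrix.posSemidef_conjTranspose_mul_self (X j)).1.eigenvalues with hedef
  have he0 : ∀ j i, 0 ≤ e j i := fun j i =>
    (Matrix.posSemidef_conjTranspose_mul_self (X j)).eigenvalues_nonneg i
  have hσe : ∀ j i, singularValues (X j) i = Real.sqrt (e j i) := fun j i => rfl
  have hesq : ∀ j i, e j i = singularValues (X j) i ^ 2 := by
    intro j i
    rw [hσe, Real.sq_sqrt (he0 j i)]
  set V : Fin k → Matrix (Fin N) (Fin N) ℂ :=
    fun j => ((Matrix.posSemidef_conjTranspose_mul_self (X j)).1.eigenvectorUnitary :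
      Matrix (Fin N) (Fin N) ℂ) with hVdef
  have hV : ∀ j, V j ∈ Matrix.unitaryGroup (Fin N) ℂ := fun j =>
    ((Matrix.posSemidef_conjTranspose_mul_self (X j)).1.eigenvectorUnitary).2
  have hspec : ∀ j, (X j)ᴴ * X j
      = V j * Matrix.diagonal (fun i => ((e j i : ℝ) : ℂ)) * star (V j) := fun j =>
    (Matrix.posSemidef_conjTranspose_mul_self (X j)).1.spectral_theorem
  by_cases hz : ∃ j, S j = 0
  · obtain ⟨j0, hj0⟩ := hz
    have hσz : ∀ i, singularValues (X j0) i ^ p j0 = 0 := by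
      intro i
      have := (Finset.sum_eq_zero_iff_of_nonneg
        (fun i _ => Real.rpow_nonneg (hσ0 j0 i) (p j0))).mp hj0
      exact this i (Finset.mem_univ i)
    have hez : ∀ i, e j0 i = 0 := by
      intro i
      have h1 : singularValues (X j0) i = 0 :=
        (Real.rpow_eq_zero (hσ0 j0 i) (hp j0).ne').mp (hσz i)
      rw [hesq, h1]
      norm_num
    have hXz : X j0 = 0 := by
      have h2 : (X j0)ᴴ * X j0 = 0 := by
        rw [hspec j0]
        have : (fun i => ((e j0 i : ℝ) : ℂ)) = fun _ => (0:ℂ) := by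
          funext i; rw [hez i]; norm_num
        rw [this]
        simp [Matrix.diagonal_zero]
      exact Matrix.conjTranspose_mul_self_eq_zero.mp h2
    rw [ofFn_prod_zero k X j0 hXz]
    simpa using hRHS0
  · push_neg at hz
    have hSpos : ∀ j, 0 < S j := fun j => (hS0 j).lt_of_ne' (hz j)
    set t : Fin k → ℝ := fun j => 1 / p j with htdef
    have ht : ∀ j, 0 < t j := fun j => one_div_pos.mpr (hp j)
    set d : Fin k → Fin N → ℝ := fun j i => singularValues (X j) i ^ p j / S j with hddef
    have hd : ∀ j i, 0 ≤ d j i := fun j i =>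
      div_nonneg (Real.rpow_nonneg (hσ0 j i) _) (hS0 j)
    have hds : ∀ j, ∑ i, d j i = 1 := by
      intro j
      rw [hddef]
      dsimp only
      rw [← Finset.sum_div]
      have hnum : (∑ i, singularValues (X j) i ^ p j) = S j := rfl
      rw [hnum]
      exact div_self (hSpos j).ne'
    have hdzero : ∀ j i, d j i = 0 ↔ singularValues (X j) i = 0 := by
      intro j i
      rw [hddef]
      dsimp only
      rw [div_eq_zero_iff]
      constructor
      · rintro (h | h)
        · exact (Real.rpow_eq_zero (hσ0 j i) (hp j).ne').mp h
        · exact absurd h (hSpos j).ne'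
      · intro h
        left
        rw [h, Real.zero_rpow (hp j).ne']
    set g : Fin k → Fin N → ℂ :=
      fun j i => if e j i = 0 then (0:ℂ) else (((singularValues (X j) i : ℝ) : ℂ))⁻¹ with hgdef
    set Cc : Fin k → Matrix (Fin N) (Fin N) ℂ :=
      fun j => X j * (V j * Matrix.diagonal (g j) * star (V j)) with hCcdef
    have hσzero : ∀ j i, singularValues (X j) i = 0 ↔ e j i = 0 := by
      intro j i
      rw [hesq]
      constructor
      · intro h; rw [h]; norm_num
      · intro h; nlinarith [hσ0 j i]
    -- Cᴴ C = V diag(π) V*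
    have hCtC : ∀ j, (Cc j)ᴴ * Cc j
        = V j * Matrix.diagonal (fun i => ((if e j i = 0 then (0:ℝ) else 1 : ℝ) : ℂ)) * star (V j) := by
      intro j
      rw [hCcdef]
      dsimp only
      rw [Matrix.conjTranspose_mul]
      have hM : (V j * Matrix.diagonal (g j) * star (V j))ᴴ
          = V j * Matrix.diagonal (star (g j)) * star (V j) :=
        conj_diag_conjTranspose (V j) (g j)
      calc (V j * Matrix.diagonal (g j) * star (V j))ᴴ * (X j)ᴴ * (X j * (V j * Matrix.diagonal (g j) * star (V j)))
          = (V j * Matrix.diagonal (g j) * star (V j))ᴴ * ((X j)ᴴ * X j) * (V j * Matrix.diagonal (g j) * star (V j)) := by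
            noncomm_ring
        _ = (V j * Matrix.diagonal (star (g j)) * star (V j))
            * (V j * Matrix.diagonal (fun i => ((e j i : ℝ) : ℂ)) * star (V j))
            * (V j * Matrix.diagonal (g j) * star (V j)) := by rw [hM, hspec j]
        _ = V j * Matrix.diagonal (fun i => star (g j) i * ((e j i : ℝ) : ℂ) * g j i) * star (V j) := by
            rw [conj_diag_mul (hV j), conj_diag_mul (hV j)]
        _ = V j * Matrix.diagonal (fun i => ((if e j i = 0 then (0:ℝ) else 1 : ℝ) : ℂ)) * star (V j) := by
            have hfuneq : (fun i => star (g j) i * ((e j i : ℝ) : ℂ) * g j i)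
                = fun i => ((if e j i = 0 then (0:ℝ) else 1 : ℝ) : ℂ) := by
              funext i
              rw [hgdef]
              dsimp only [Pi.star_apply]
              split_ifs with h
              · simp
              · have hσne : singularValues (X j) i ≠ 0 := fun hc => h ((hσzero j i).mp hc)
                rw [hesq j i]
                rw [show star ((((singularValues (X j) i : ℝ)) : ℂ))⁻¹
                    = (((singularValues (X j) i : ℝ) : ℂ))⁻¹ by
                  rw [star_inv₀]
                  congr 1
                  exact Complex.conj_ofReal _]
                rw [show ((((singularValues (X j) i) ^ 2 : ℝ)) : ℂ)
                    = ((singularValues (X j) i : ℝ) : ℂ) ^ 2 by push_cast; ring]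
                field_simp
                norm_num
            rw [hfuneq]
    have hCc_ctr : ∀ j, Ctr (Cc j) := by
      intro j
      apply ctr_of_conj_eq (hV j) (hCtC j)
      intro i
      split_ifs <;> norm_num
    -- the projection identity : X * (V diag π V*) = X
    have hproj : ∀ j, X j * (V j * Matrix.diagonal
        (fun i => ((if e j i = 0 then (0:ℝ) else 1 : ℝ) : ℂ)) * star (V j)) = X j := by
      intro j
      set πc : Fin N → ℂ := fun i => ((if e j i = 0 then (0:ℝ) else 1 : ℝ) : ℂ) with hπdef
      set D : Matrix (Fin N) (Fin N) ℂ :=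
        X j * (V j * Matrix.diagonal πc * star (V j)) - X j with hDdef
      have hD0 : D = 0 := by
        rw [← Matrix.conjTranspose_mul_self_eq_zero]
        have hD2 : D = X j * (V j * Matrix.diagonal (fun i => πc i - 1) * star (V j)) := by
          rw [hDdef]
          have h1 : V j * Matrix.diagonal (fun _ => (1:ℂ)) * star (V j)
              = (1 : Matrix (Fin N) (Fin N) ℂ) := by
            rw [Matrix.diagonal_one, mul_one, Matrix.mem_unitaryGroup_iff.mp (hV j)]
          have h2 : (Matrix.diagonal (fun i => πc i - 1) : Matrix (Fin N) (Fin N) ℂ)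
              = Matrix.diagonal πc - Matrix.diagonal (fun _ => (1:ℂ)) :=
            (Matrix.diagonal_sub πc (fun _ => (1:ℂ))).symm
          rw [h2, Matrix.mul_sub, Matrix.sub_mul, Matrix.mul_sub, h1, mul_one]
        rw [hD2]
        rw [Matrix.conjTranspose_mul]
        calc (V j * Matrix.diagonal (fun i => πc i - 1) * star (V j))ᴴ * (X j)ᴴ
              * (X j * (V j * Matrix.diagonal (fun i => πc i - 1) * star (V j)))
            = (V j * Matrix.diagonal (star (fun i => πc i - 1)) * star (V j))
              * ((X j)ᴴ * X j) * (V j * Matrix.diagonal (fun i => πc i - 1) * star (V j)) := by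
              rw [conj_diag_conjTranspose]
              noncomm_ring
          _ = (V j * Matrix.diagonal (star (fun i => πc i - 1)) * star (V j))
              * (V j * Matrix.diagonal (fun i => ((e j i : ℝ) : ℂ)) * star (V j))
              * (V j * Matrix.diagonal (fun i => πc i - 1) * star (V j)) := by rw [hspec j]
          _ = V j * Matrix.diagonal (fun i => star (fun i => πc i - 1) i * ((e j i : ℝ) : ℂ)
                * (πc i - 1)) * star (V j) := by
              rw [conj_diag_mul (hV j), conj_diag_mul (hV j)]
          _ = 0 := by
              have : (fun i => star (fun i => πc i - 1) i * ((e j i : ℝ) : ℂ) * (πc i - 1))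
                  = fun _ => (0:ℂ) := by
                funext i
                rcases eq_or_ne (e j i) 0 with h | h <;> simp [hπdef, h]
              rw [this]
              simp [Matrix.diagonal_zero]
      have := sub_eq_zero.mp hD0
      exact this
    -- decomposition of X j
    have hkey_scal : ∀ j, (((S j ^ t j : ℝ)) : ℂ) • dpw (d j) ((t j : ℝ) : ℂ)
        = fun i => ((singularValues (X j) i : ℝ) : ℂ) := by
      intro j
      funext i
      rw [Pi.smul_apply]
      unfold dpw
      split_ifs with h
      · rw [(hdzero j i).mp h]
        simp
      · have hdpos : 0 < d j i := lt_of_le_of_ne (hd j i) (Ne.symm h)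
        rw [← Complex.ofReal_cpow (hd j i)]
        rw [smul_eq_mul, ← Complex.ofReal_mul]
        congr 1
        have hσpos : singularValues (X j) i ≠ 0 := fun hc => h ((hdzero j i).mpr hc)
        rw [hddef]
        dsimp only
        rw [Real.div_rpow (Real.rpow_nonneg (hσ0 j i) _) (hS0 j),
          mul_comm,
          div_mul_cancel₀ _ (Real.rpow_pos_of_pos (hSpos j) _).ne',
          ← Real.rpow_mul (hσ0 j i),
          show p j * t j = 1 by rw [htdef]; dsimp only; rw [mul_one_div]; exact div_self (hp j).ne',
          Real.rpow_one]
    -- the decomposition X j = S^t • trm ...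
    have hXdec : ∀ j, X j = (((S j ^ t j : ℝ)) : ℂ) • trm (Cc j) (V j) (d j) ((t j : ℝ) : ℂ) := by
      intro j
      rw [trm_eq, ← mul_smul_comm]
      have hQ : (((S j ^ t j : ℝ)) : ℂ)
            • (V j * Matrix.diagonal (dpw (d j) ((t j : ℝ) : ℂ)) * star (V j))
          = V j * Matrix.diagonal (fun i => ((singularValues (X j) i : ℝ) : ℂ)) * star (V j) := by
        rw [← smul_mul_assoc, ← mul_smul_comm, ← Matrix.diagonal_smul, hkey_scal j]
      rw [hQ, hCcdef]
      dsimp only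
      rw [mul_assoc, conj_diag_mul (hV j)]
      have hgs : (fun i => g j i * ((singularValues (X j) i : ℝ) : ℂ))
          = fun i => ((if e j i = 0 then (0:ℝ) else 1 : ℝ) : ℂ) := by
        funext i
        rw [hgdef]
        dsimp only
        split_ifs with h
        · simp
        · have hσne : singularValues (X j) i ≠ 0 := fun hc => h ((hσzero j i).mp hc)
          rw [inv_mul_cancel₀ (by exact_mod_cast hσne)]
          norm_num
      rw [hgs, hproj j]
    -- final computation
    have hXfn : List.ofFn X
        = List.ofFn (fun j => (((S j ^ t j : ℝ)) : ℂ) • trm (Cc j) (V j) (d j) ((t j : ℝ) : ℂ)) :=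
      congrArg List.ofFn (funext hXdec)
    have hts' : ∑ j, t j = 1 := by rw [htdef]; exact hpq
    have hmain := key k Cc V d t hCc_ctr hV hd hds ht hts'
    have hprod_nonneg : 0 ≤ ∏ j, S j ^ t j :=
      Finset.prod_nonneg fun j _ => (Real.rpow_pos_of_pos (hSpos j) _).le
    calc ‖(List.ofFn X).prod.trace‖
        = ‖((∏ j, (((S j ^ t j : ℝ)) : ℂ))
            • (List.ofFn fun j => trm (Cc j) (V j) (d j) ((t j : ℝ) : ℂ)).prod).trace‖ := by
          rw [hXfn, smul_ofFn_prod]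
      _ = (∏ j, S j ^ t j) * ‖(List.ofFn fun j => trm (Cc j) (V j) (d j) ((t j : ℝ) : ℂ)).prod.trace‖ := by
          rw [Matrix.trace_smul, smul_eq_mul, norm_mul]
          congr 1
          rw [← Complex.ofReal_prod, Complex.norm_of_nonneg hprod_nonneg]
      _ ≤ (∏ j, S j ^ t j) * 1 := by
          apply mul_le_mul_of_nonneg_left hmain hprod_nonneg
      _ = ∏ j, schattenNorm (p j) (X j) := by
          rw [mul_one]
          apply Finset.prod_congr rfl
          intro j _
          rw [hschat j, htdef]
end
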